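/- Let (r-1)k > 1 with r ≥ 2 and k > 0, let B be the open unit ball in ℝ², ψ_∞(R) = c(1-|R|²)^k, and define τ_{ij}(ψ) = ∫_B R_i ∂_{R_j}U(R) ψ(R) dR where U(R) = -k log(1-|R|²). Then there is a constant C = C(k, r) such that |τ(ψ)| ≤ C ‖ψ‖_{𝓛^r} for every ψ with finite weighted norm ‖ψ‖_{𝓛^r} = (∫_B ψ_∞ |ψ/ψ_∞|^r dR)^{1/r}. -/

import Mathlib

open MeasureTheory
open Set

lemma aux_int {a : ℝ} (ha : -1 < a) :
    IntegrableOn (fun x : EuclideanSpace ℝ (Fin 2) => (1 - ‖x‖ ^ 2) ^ a)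
      (Metric.ball 0 1) := by
  have hmeas : Measurable fun x : EuclideanSpace ℝ (Fin 2) => (1 - ‖x‖ ^ 2) ^ a := by fun_prop
  have hball : ∀ x ∈ Metric.ball (0 : EuclideanSpace ℝ (Fin 2)) 1,
      0 < 1 - ‖x‖ ^ 2 := by
    intro x hx
    rw [Metric.mem_ball, dist_zero_right] at hx
    nlinarith [norm_nonneg x]
  rcases le_or_gt 0 a with h0 | h0
  · apply Measure.integrableOn_of_bounded (measure_ball_lt_top.ne) hmeas.aestronglyMeasurable
      (M := 1)
    filter_upwards [ae_restrict_mem Metric.isOpen_ball.measurableSet] with x hx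
    have hb := hball x hx
    have hb1 : 1 - ‖x‖ ^ 2 ≤ 1 := by nlinarith [norm_nonneg x]
    rw [Real.norm_eq_abs, abs_of_nonneg (Real.rpow_nonneg hb.le a)]
    exact Real.rpow_le_one hb.le hb1 h0
  · -- singular case
    have ha0 : a ≠ 0 := h0.ne
    have hia : 1 / a < -1 := by
      rw [div_lt_iff_of_neg h0]
      linarith
    refine ⟨hmeas.aestronglyMeasurable, ?_⟩
    have hnn : 0 ≤ᵐ[volume.restrict (Metric.ball (0 : EuclideanSpace ℝ (Fin 2)) 1)]
        fun x => (1 - ‖x‖ ^ 2) ^ a := by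
      filter_upwards [ae_restrict_mem Metric.isOpen_ball.measurableSet] with x hx
      exact Real.rpow_nonneg (hball x hx).le a
    rw [hasFiniteIntegral_iff_ofReal hnn,
      lintegral_eq_lintegral_meas_lt _ hnn hmeas.aemeasurable]
    set μr := volume.restrict (Metric.ball (0 : EuclideanSpace ℝ (Fin 2)) 1) with hμr
    set V := volume (Metric.ball (0 : EuclideanSpace ℝ (Fin 2)) 1) with hV
    have hVlt : V < ⊤ := measure_ball_lt_top
    have hμr_le : ∀ s : Set (EuclideanSpace ℝ (Fin 2)), μr s ≤ V := by
      intro s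
      calc μr s ≤ μr univ := measure_mono (subset_univ s)
      _ = V := by rw [hμr, Measure.restrict_apply_univ]
    have key : ∀ t : ℝ, 1 < t →
        μr {x | t < (1 - ‖x‖ ^ 2) ^ a} ≤ ENNReal.ofReal (t ^ (1/a)) * V := by
      intro t ht
      have ht0 : 0 < t := by linarith
      have hu0 : 0 < t ^ (1/a) := Real.rpow_pos_of_pos ht0 _
      have hu1 : t ^ (1/a) ≤ 1 :=
        Real.rpow_le_one_of_one_le_of_nonpos ht.le (by linarith)
      set s := Real.sqrt (1 - t ^ (1/a)) with hs
      have hs2 : s ^ 2 = 1 - t ^ (1/a) := Real.sq_sqrt (by linarith)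
      have hs1 : s ≤ 1 := by
        have h' : s ≤ Real.sqrt 1 := Real.sqrt_le_sqrt (by linarith)
        simpa using h'
      have hsub : {x : EuclideanSpace ℝ (Fin 2) | t < (1 - ‖x‖ ^ 2) ^ a} ∩
          Metric.ball 0 1 ⊆ Metric.ball 0 1 \ Metric.ball 0 s := by
        rintro x ⟨hxt, hx⟩
        refine ⟨hx, fun hxs => ?_⟩
        have hb := hball x hx
        have hble : 1 - ‖x‖ ^ 2 ≤ t ^ (1/a) := by
          have h1 : ((1 - ‖x‖ ^ 2) ^ a) ^ (1/a) ≤ t ^ (1/a) :=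
            Real.rpow_le_rpow_of_nonpos ht0 (le_of_lt hxt) (by
              rw [one_div]
              exact inv_nonpos.mpr h0.le)
          rwa [← Real.rpow_mul hb.le, mul_one_div_cancel ha0, Real.rpow_one] at h1
        rw [Metric.mem_ball, dist_zero_right] at hxs
        have hx2 : ‖x‖ ^ 2 < s ^ 2 := by
          apply pow_lt_pow_left₀ hxs (norm_nonneg x)
          norm_num
        rw [hs2] at hx2
        linarith
      have hmble : MeasurableSet {x : EuclideanSpace ℝ (Fin 2) | t < (1 - ‖x‖ ^ 2) ^ a} :=
        measurableSet_lt measurable_const hmeas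
      calc μr {x | t < (1 - ‖x‖ ^ 2) ^ a}
          = volume ({x : EuclideanSpace ℝ (Fin 2) | t < (1 - ‖x‖ ^ 2) ^ a} ∩
              Metric.ball 0 1) := by
            rw [hμr, Measure.restrict_apply hmble]
        _ ≤ volume (Metric.ball (0 : EuclideanSpace ℝ (Fin 2)) 1 \ Metric.ball 0 s) :=
            measure_mono hsub
        _ ≤ ENNReal.ofReal (t ^ (1/a)) * V := by
            rw [measure_diff (Metric.ball_subset_ball hs1)
              Metric.isOpen_ball.measurableSet.nullMeasurableSet
              (measure_ball_lt_top.ne)]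
            rw [tsub_le_iff_right]
            have hball_s : volume (Metric.ball (0 : EuclideanSpace ℝ (Fin 2)) s) =
                ENNReal.ofReal (s ^ 2) * V := by
              rw [hV, Measure.addHaar_ball _ _ (Real.sqrt_nonneg _),
                finrank_euclideanSpace_fin]
            rw [hball_s, hs2, ← add_mul, ← ENNReal.ofReal_add hu0.le (by linarith)]
            have : t ^ (1/a) + (1 - t ^ (1/a)) = 1 := by ring
            rw [this, ENNReal.ofReal_one, one_mul]
    have hsplit : Ioi (0:ℝ) = Ioc 0 1 ∪ Ioi 1 := (Set.Ioc_union_Ioi_eq_Ioi zero_le_one).symm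
    rw [hsplit, lintegral_union measurableSet_Ioi (Set.Ioc_disjoint_Ioi le_rfl)]
    apply ENNReal.add_lt_top.mpr
    constructor
    · calc ∫⁻ t in Ioc (0:ℝ) 1, μr {x | t < (1 - ‖x‖ ^ 2) ^ a}
          ≤ ∫⁻ _ in Ioc (0:ℝ) 1, V := lintegral_mono fun t => hμr_le _
        _ = V * volume (Ioc (0:ℝ) 1) := setLIntegral_const _ _
        _ < ⊤ := ENNReal.mul_lt_top hVlt (by simp [Real.volume_Ioc])
    · have hfm : Measurable fun t : ℝ => ENNReal.ofReal (t ^ (1/a)) * V := by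
        apply Measurable.mul_const
        apply Measurable.ennreal_ofReal
        fun_prop
      calc ∫⁻ t in Ioi (1:ℝ), μr {x | t < (1 - ‖x‖ ^ 2) ^ a}
          ≤ ∫⁻ t in Ioi (1:ℝ), ENNReal.ofReal (t ^ (1/a)) * V :=
            setLIntegral_mono hfm fun t ht => key t ht
        _ = (∫⁻ t in Ioi (1:ℝ), ENNReal.ofReal (t ^ (1/a))) * V := by
            rw [lintegral_mul_const]
            apply Measurable.ennreal_ofReal
            fun_prop
        _ < ⊤ := ENNReal.mul_lt_top
            (integrableOn_Ioi_rpow_of_lt hia one_pos).lintegral_lt_top hVlt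

lemma aux_coord_le (R : EuclideanSpace ℝ (Fin 2)) (i : Fin 2) : |R i| ≤ ‖R‖ := by
  have h := abs_real_inner_le_norm (EuclideanSpace.single i (1:ℝ)) R
  rw [EuclideanSpace.inner_single_left, EuclideanSpace.norm_single] at h
  simpa using h

lemma aux_grad (k : ℝ) (U : EuclideanSpace ℝ (Fin 2) → ℝ)
    (hU : ∀ R, U R = -k * Real.log (1 - ‖R‖ ^ 2))
    {R : EuclideanSpace ℝ (Fin 2)} (hR : ‖R‖ < 1) :
    gradient U R = (2 * k / (1 - ‖R‖ ^ 2)) • R := by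
  have hb : 0 < 1 - ‖R‖ ^ 2 := by nlinarith [norm_nonneg R]
  have h1 : HasFDerivAt (fun x : EuclideanSpace ℝ (Fin 2) => ‖x‖ ^ 2)
      (2 • (innerSL ℝ R)) R := by
    simpa using (hasFDerivAt_id R).norm_sq
  have hd : HasDerivAt (fun t : ℝ => 1 - t) (-1) (‖R‖ ^ 2) := by
    simpa using (hasDerivAt_id (‖R‖ ^ 2)).const_sub 1
  have hl : HasDerivAt (fun t : ℝ => Real.log (1 - t)) ((1 - ‖R‖ ^ 2)⁻¹ * (-1)) (‖R‖ ^ 2) :=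
    (Real.hasDerivAt_log hb.ne').comp _ hd
  have h2 : HasDerivAt (fun t : ℝ => -k * Real.log (1 - t)) (k / (1 - ‖R‖ ^ 2)) (‖R‖ ^ 2) := by
    have := hl.const_mul (-k)
    exact this.congr_deriv (by ring)
  have h3 : HasFDerivAt U ((k / (1 - ‖R‖ ^ 2)) • (2 • innerSL ℝ R)) R := by
    have hUe : U = (fun t : ℝ => -k * Real.log (1 - t)) ∘ (fun x : EuclideanSpace ℝ (Fin 2) => ‖x‖ ^ 2) := by
      funext x; simp [hU x, Function.comp]
    rw [hUe]
    exact h2.comp_hasFDerivAt R h1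
  have h4 : HasGradientAt U ((2 * k / (1 - ‖R‖ ^ 2)) • R) R := by
    rw [hasGradientAt_iff_hasFDerivAt]
    refine h3.congr_fderiv ?_
    ext y
    simp [real_inner_smul_left]
    ring
  exact h4.gradient

lemma aux_pt {k c r r' b : ℝ} (hk : 0 < k) (hc : 0 < c) (hb : 0 < b)
    (hsum : r'⁻¹ + r⁻¹ = 1) (ψx : ℝ) :
    (2 * k * c ^ (1/r') * b ^ (k/r' - 1)) *
      ((c * b ^ k) ^ (1/r) * |ψx / (c * b ^ k)|) = 2 * k / b * |ψx| := by
  have hP : 0 < c * b ^ k := by positivity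
  have hcc : c ^ (1/r') * c ^ (1/r) = c := by
    rw [← Real.rpow_add hc, show 1/r' + 1/r = 1 by simpa [one_div] using hsum, Real.rpow_one]
  have hbb : b ^ (k/r' - 1) * b ^ (k * (1/r)) = b ^ (k - 1) := by
    rw [← Real.rpow_add hb]
    congr 1
    linear_combination k * hsum
  have hbk : b ^ (k - 1) = b ^ k / b := by
    rw [Real.rpow_sub hb, Real.rpow_one]
  rw [abs_div, abs_of_pos hP, Real.mul_rpow hc.le (Real.rpow_nonneg hb.le k),
    ← Real.rpow_mul hb.le]
  calc 2 * k * c ^ (1/r') * b ^ (k/r' - 1) *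
        (c ^ (1/r) * b ^ (k * (1/r)) * (|ψx| / (c * b ^ k)))
      = (c ^ (1/r') * c ^ (1/r)) * (b ^ (k/r' - 1) * b ^ (k * (1/r))) *
        (2 * k * |ψx| / (c * b ^ k)) := by ring
    _ = c * b ^ (k - 1) * (2 * k * |ψx| / (c * b ^ k)) := by rw [hcc, hbb]
    _ = 2 * k / b * |ψx| := by
        rw [hbk]
        have hbk' : 0 < b ^ k := Real.rpow_pos_of_pos hb k
        field_simp

lemma aux_pow1 {k c r' b : ℝ} (hk : 0 < k) (hc : 0 < c) (hb : 0 < b) (hr' : 0 < r') :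
    (2 * k * c ^ (1/r') * b ^ (k/r' - 1)) ^ r' = (2*k) ^ r' * c * b ^ (k - r') := by
  have h2k : (0:ℝ) < 2 * k := by linarith
  rw [Real.mul_rpow (by positivity) (Real.rpow_nonneg hb.le _),
    Real.mul_rpow h2k.le (Real.rpow_nonneg hc.le _),
    ← Real.rpow_mul hc.le, ← Real.rpow_mul hb.le,
    one_div_mul_cancel hr'.ne', Real.rpow_one]
  congr 2
  field_simp

lemma aux_pow2 {r P : ℝ} (hP : 0 < P) (hr : 0 < r) (ψx : ℝ) :
    (P ^ (1/r) * |ψx / P|) ^ r = P * |ψx / P| ^ r := by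
  rw [Real.mul_rpow (Real.rpow_nonneg hP.le _) (abs_nonneg _),
    ← Real.rpow_mul hP.le, one_div_mul_cancel hr.ne', Real.rpow_one]

/-- the FENE elastic stress τ_{ij}(ψ) = ∫_B R_i ∂_{R_j}U ψ dR
is bounded by the weighted 𝓛^r norm of ψ when (r-1)k > 1. -/
theorem stmt_4 (k c r : ℝ) (hk : 0 < k) (hc : 0 < c) (hr : 2 ≤ r)
    (hrk : 1 < (r - 1) * k)
    (U ψinf : EuclideanSpace ℝ (Fin 2) → ℝ)
    (hU : ∀ R, U R = -k * Real.log (1 - ‖R‖ ^ 2))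
    (hψinf : ∀ R, ψinf R = c * (1 - ‖R‖ ^ 2) ^ k) :
    ∃ C > 0, ∀ ψ : EuclideanSpace ℝ (Fin 2) → ℝ, Measurable ψ →
      IntegrableOn (fun R => ψinf R * |ψ R / ψinf R| ^ r)
        (Metric.ball (0 : EuclideanSpace ℝ (Fin 2)) 1) →
      ∀ i j : Fin 2,
        |∫ R in Metric.ball (0 : EuclideanSpace ℝ (Fin 2)) 1,
            R i * gradient U R j * ψ R| ≤
          C * (∫ R in Metric.ball (0 : EuclideanSpace ℝ (Fin 2)) 1,
            ψinf R * |ψ R / ψinf R| ^ r) ^ (1 / r) := by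
  have hψe : ψinf = fun R => c * (1 - ‖R‖ ^ 2) ^ k := funext hψinf
  subst hψe
  set B := Metric.ball (0 : EuclideanSpace ℝ (Fin 2)) 1 with hB
  set μ := volume.restrict B with hμ
  have hr1 : (1:ℝ) < r := lt_of_lt_of_le one_lt_two hr
  have hrpos : (0:ℝ) < r := by linarith
  set r' : ℝ := r / (r - 1) with hr'
  have hpq : r'.HolderConjugate r := (Real.HolderConjugate.conjExponent hr1).symm
  have hr'pos : (0:ℝ) < r' := hpq.pos
  have hsum : r'⁻¹ + r⁻¹ = 1 := hpq.inv_add_inv_eq_one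
  have hrm1 : (0:ℝ) < r - 1 := by linarith
  have ha : (-1:ℝ) < k - r' := by
    rw [hr', neg_lt_sub_iff_lt_add, div_lt_iff₀ hrm1]
    nlinarith
  have hball : ∀ x ∈ B, (0:ℝ) < 1 - ‖x‖ ^ 2 := by
    intro x hx
    rw [hB, Metric.mem_ball, dist_zero_right] at hx
    nlinarith [norm_nonneg x]
  -- constant
  set I : ℝ := ∫ x in B, (1 - ‖x‖ ^ 2) ^ (k - r') with hI
  have hI0 : 0 ≤ I := setIntegral_nonneg Metric.isOpen_ball.measurableSet fun x hx =>
    Real.rpow_nonneg (hball x hx).le _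
  set A : ℝ := (2*k) ^ r' * c * I with hA
  have hA0 : 0 ≤ A := by positivity
  refine ⟨A ^ (1/r') + 1, by positivity, ?_⟩
  intro ψ hψm hint i j
  set F₁ : EuclideanSpace ℝ (Fin 2) → ℝ :=
    fun x => 2 * k * c ^ (1/r') * (1 - ‖x‖ ^ 2) ^ (k/r' - 1) with hF₁
  set F₂ : EuclideanSpace ℝ (Fin 2) → ℝ :=
    fun x => (c * (1 - ‖x‖ ^ 2) ^ k) ^ (1/r) * |ψ x / (c * (1 - ‖x‖ ^ 2) ^ k)| with hF₂
  have hF₁m : Measurable F₁ := by rw [hF₁]; fun_prop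
  have hF₂m : Measurable F₂ := by rw [hF₂]; fun_prop
  -- Memℒp facts
  have hF1L : MemLp F₁ (ENNReal.ofReal r') μ := by
    have h1 : MemLp (fun x => ‖F₁ x‖ ^ (ENNReal.ofReal r').toReal)
        ((ENNReal.ofReal r') / (ENNReal.ofReal r')) μ := by
      rw [ENNReal.toReal_ofReal hr'pos.le,
        ENNReal.div_self (by simp [hr'pos]) ENNReal.ofReal_ne_top,
        memLp_one_iff_integrable]
      apply Integrable.congr (((aux_int ha).const_mul ((2*k) ^ r' * c)))
      filter_upwards [ae_restrict_mem Metric.isOpen_ball.measurableSet] with x hx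
      have hb := hball x hx
      have hF₁nn : 0 ≤ F₁ x := by rw [hF₁]; positivity
      rw [Real.norm_eq_abs, abs_of_nonneg hF₁nn, hF₁, aux_pow1 hk hc hb hr'pos]
    exact (memLp_norm_rpow_iff hF₁m.aestronglyMeasurable
      (by simp [hr'pos]) ENNReal.ofReal_ne_top).1 h1
  have hF2L : MemLp F₂ (ENNReal.ofReal r) μ := by
    have h1 : MemLp (fun x => ‖F₂ x‖ ^ (ENNReal.ofReal r).toReal)
        ((ENNReal.ofReal r) / (ENNReal.ofReal r)) μ := by
      rw [ENNReal.toReal_ofReal hrpos.le,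
        ENNReal.div_self (by simp [hrpos]) ENNReal.ofReal_ne_top,
        memLp_one_iff_integrable]
      apply Integrable.congr hint
      filter_upwards [ae_restrict_mem Metric.isOpen_ball.measurableSet] with x hx
      have hb := hball x hx
      have hP : (0:ℝ) < c * (1 - ‖x‖ ^ 2) ^ k := by positivity
      have hF₂nn : 0 ≤ F₂ x := by
        rw [hF₂]
        positivity
      rw [Real.norm_eq_abs, abs_of_nonneg hF₂nn, hF₂, aux_pow2 hP hrpos]
    exact (memLp_norm_rpow_iff hF₂m.aestronglyMeasurable
      (by simp [hrpos]) ENNReal.ofReal_ne_top).1 h1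
  have hInt12 : Integrable (fun x => F₁ x * F₂ x) μ := by
    haveI : ENNReal.HolderTriple (ENNReal.ofReal r') (ENNReal.ofReal r) 1 :=
      ⟨by rw [inv_one]; exact hpq.inv_add_inv_ennreal⟩
    have h := hF2L.smul (𝕜 := ℝ) hF1L (r := 1)
    rw [memLp_one_iff_integrable] at h
    exact h.congr (by filter_upwards with x; simp [smul_eq_mul])
  -- pointwise bound
  have hle : ∀ᵐ x ∂μ, ‖x i * gradient U x j * ψ x‖ ≤ F₁ x * F₂ x := by
    filter_upwards [ae_restrict_mem Metric.isOpen_ball.measurableSet] with x hx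
    have hx1 : ‖x‖ < 1 := by rwa [hB, Metric.mem_ball, dist_zero_right] at hx
    have hb := hball x hx
    rw [aux_grad k U hU hx1]
    have hsmul : ((2 * k / (1 - ‖x‖ ^ 2)) • x) j = (2 * k / (1 - ‖x‖ ^ 2)) * x j := rfl
    rw [hsmul, Real.norm_eq_abs]
    have hxi : |x i| ≤ 1 := (aux_coord_le x i).trans hx1.le
    have hxj : |x j| ≤ 1 := (aux_coord_le x j).trans hx1.le
    have h2kb : (0:ℝ) ≤ 2 * k / (1 - ‖x‖ ^ 2) := by positivity
    calc |x i * (2 * k / (1 - ‖x‖ ^ 2) * x j) * ψ x|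
        = |x i| * (2 * k / (1 - ‖x‖ ^ 2)) * |x j| * |ψ x| := by
          rw [abs_mul, abs_mul, abs_mul, abs_of_nonneg h2kb]
          ring
      _ ≤ 1 * (2 * k / (1 - ‖x‖ ^ 2)) * 1 * |ψ x| := by
          gcongr
      _ = 2 * k / (1 - ‖x‖ ^ 2) * |ψ x| := by ring
      _ = F₁ x * F₂ x := (aux_pt hk hc hb hsum (ψ x)).symm
  have hgmeas : AEStronglyMeasurable (fun x => x i * gradient U x j * ψ x) μ := by
    have h0 : Measurable fun x : EuclideanSpace ℝ (Fin 2) =>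
        x i * (2 * k / (1 - ‖x‖ ^ 2) * x j) * ψ x := by fun_prop
    apply h0.aestronglyMeasurable.congr
    filter_upwards [ae_restrict_mem Metric.isOpen_ball.measurableSet] with x hx
    have hx1 : ‖x‖ < 1 := by rwa [hB, Metric.mem_ball, dist_zero_right] at hx
    rw [aux_grad k U hU hx1]
    rfl
  have hgInt : Integrable (fun x => x i * gradient U x j * ψ x) μ :=
    hInt12.mono' hgmeas hle
  -- nonnegativity for Hölder
  have hF1nn : 0 ≤ᵐ[μ] F₁ := by
    filter_upwards [ae_restrict_mem Metric.isOpen_ball.measurableSet] with x hx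
    have hb := hball x hx
    rw [hF₁]; positivity
  have hF2nn : 0 ≤ᵐ[μ] F₂ := by
    filter_upwards [ae_restrict_mem Metric.isOpen_ball.measurableSet] with x hx
    have hb := hball x hx
    rw [hF₂]; positivity
  -- value of ∫ F₁ ^ r'
  have hIF1 : ∫ x, F₁ x ^ r' ∂μ = A := by
    rw [hμ, hA]
    rw [setIntegral_congr_fun Metric.isOpen_ball.measurableSet
      (g := fun x => (2*k) ^ r' * c * (1 - ‖x‖ ^ 2) ^ (k - r'))
      (fun x hx => by
        have hb := hball x hx
        rw [hF₁]
        exact aux_pow1 hk hc hb hr'pos)]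
    rw [mul_assoc, integral_const_mul, ← hI, ← mul_assoc]
  have hIF2 : ∫ x, F₂ x ^ r ∂μ = ∫ x in B, (c * (1 - ‖x‖ ^ 2) ^ k) *
      |ψ x / (c * (1 - ‖x‖ ^ 2) ^ k)| ^ r := by
    rw [hμ]
    apply setIntegral_congr_fun Metric.isOpen_ball.measurableSet
    intro x hx
    have hb := hball x hx
    have hP : (0:ℝ) < c * (1 - ‖x‖ ^ 2) ^ k := by positivity
    rw [hF₂]
    exact aux_pow2 hP hrpos (ψ x)
  have hX0 : 0 ≤ ∫ x in B, (c * (1 - ‖x‖ ^ 2) ^ k) *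
      |ψ x / (c * (1 - ‖x‖ ^ 2) ^ k)| ^ r := by
    apply setIntegral_nonneg Metric.isOpen_ball.measurableSet
    intro x hx
    have hb := hball x hx
    positivity
  calc |∫ x in B, x i * gradient U x j * ψ x|
      = ‖∫ x, x i * gradient U x j * ψ x ∂μ‖ := by rw [Real.norm_eq_abs, hμ]
    _ ≤ ∫ x, ‖x i * gradient U x j * ψ x‖ ∂μ := norm_integral_le_integral_norm _
    _ ≤ ∫ x, F₁ x * F₂ x ∂μ := integral_mono_ae hgInt.norm hInt12 hle
    _ ≤ (∫ x, F₁ x ^ r' ∂μ) ^ (1/r') * (∫ x, F₂ x ^ r ∂μ) ^ (1/r) :=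
        integral_mul_le_Lp_mul_Lq_of_nonneg hpq hF1nn hF2nn hF1L hF2L
    _ = A ^ (1/r') * (∫ x in B, (c * (1 - ‖x‖ ^ 2) ^ k) *
          |ψ x / (c * (1 - ‖x‖ ^ 2) ^ k)| ^ r) ^ (1/r) := by rw [hIF1, hIF2]
    _ ≤ (A ^ (1/r') + 1) * (∫ x in B, (c * (1 - ‖x‖ ^ 2) ^ k) *
          |ψ x / (c * (1 - ‖x‖ ^ 2) ^ k)| ^ r) ^ (1/r) := by
        have : (0:ℝ) ≤ (∫ x in B, (c * (1 - ‖x‖ ^ 2) ^ k) *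
            |ψ x / (c * (1 - ‖x‖ ^ 2) ^ k)| ^ r) ^ (1/r) := Real.rpow_nonneg hX0 _
        nlinarith [Real.rpow_nonneg hA0 (1/r')]
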